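/- arXiv:1811.10994 — 5 statements merged into one kernel-verified Lean document; each statement's English description precedes it below -/
import Mathlib

section
/- Let c₂, c₃, c₄ be real constants with c₄ ≥ 0, and let f : ℝ → ℝ be differentiable. Define F(ξ) = (4·f(ξ)² − c₂)/(c₃ − 4·√c₄·f(ξ)) wherever the denominator is nonzero. Then the algebraic identity (F′)² − c₂F² − c₃F³ − c₄F⁴ = 16·(f′ − f² + c₂/4)·(f′ + f² − c₂/4)·H(f)/(4√c₄·f − c₃)⁴ holds at every point where c₃ − 4√c₄·f ≠ 0, where H(f) = 16c₄f⁴ − 16c₃√c₄·f³ + (4c₃² + 8c₂c₄)f² − 4c₂c₃√c₄·f + c₂²c₄. In particular, if f satisfies the Riccati equation f′ = f² − c₂/4, then F satisfies (F′)² = c₂F² + c₃F³ + c₄F⁴. -/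
theorem stmt_12 (c₂ c₃ c₄ : ℝ) (hc₄ : 0 ≤ c₄) (f : ℝ → ℝ)
    (hf : Differentiable ℝ f) (F : ℝ → ℝ)
    (hF : ∀ ξ, F ξ = (4 * (f ξ)^2 - c₂) / (c₃ - 4 * Real.sqrt c₄ * f ξ)) :
    (∀ ξ, c₃ - 4 * Real.sqrt c₄ * f ξ ≠ 0 →
      (deriv F ξ)^2 - c₂ * (F ξ)^2 - c₃ * (F ξ)^3 - c₄ * (F ξ)^4 =
        16 * (deriv f ξ - (f ξ)^2 + c₂/4) * (deriv f ξ + (f ξ)^2 - c₂/4) *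
          (16 * c₄ * (f ξ)^4 - 16 * c₃ * Real.sqrt c₄ * (f ξ)^3 +
            (4 * c₃^2 + 8 * c₂ * c₄) * (f ξ)^2 -
            4 * c₂ * c₃ * Real.sqrt c₄ * f ξ + c₂^2 * c₄) /
          (4 * Real.sqrt c₄ * f ξ - c₃)^4) ∧
    ((∀ ξ, deriv f ξ = (f ξ)^2 - c₂/4) →
      ∀ ξ, c₃ - 4 * Real.sqrt c₄ * f ξ ≠ 0 →
        (deriv F ξ)^2 = c₂ * (F ξ)^2 + c₃ * (F ξ)^3 + c₄ * (F ξ)^4) := by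
  set s := Real.sqrt c₄ with hs
  have hs2 : s ^ 2 = c₄ := Real.sq_sqrt hc₄
  have hFfun : F = fun x => (4 * (f x)^2 - c₂) / (c₃ - 4 * s * f x) :=
    funext hF
  have hderiv : ∀ ξ, c₃ - 4 * s * f ξ ≠ 0 →
      deriv F ξ = (8 * f ξ * deriv f ξ * (c₃ - 4 * s * f ξ) -
        (4 * (f ξ)^2 - c₂) * (-(4 * s * deriv f ξ))) / (c₃ - 4 * s * f ξ)^2 := by
    intro ξ hne
    have h1 : HasDerivAt (fun x => 4 * (f x)^2 - c₂) (8 * f ξ * deriv f ξ) ξ := by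
      have h1' := (((hf ξ).hasDerivAt.fun_pow 2).const_mul (4 : ℝ)).sub_const c₂
      exact h1'.congr_deriv (by norm_num; ring)
    have h2 : HasDerivAt (fun x => c₃ - 4 * s * f x) (-(4 * s * deriv f ξ)) ξ := by
      have := ((hf ξ).hasDerivAt.const_mul (4 * s)).const_sub c₃
      simpa [mul_assoc] using this
    rw [hFfun]
    exact (h1.div h2 hne).deriv
  have key : ∀ ξ, c₃ - 4 * s * f ξ ≠ 0 →
      (deriv F ξ)^2 - c₂ * (F ξ)^2 - c₃ * (F ξ)^3 - c₄ * (F ξ)^4 =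
        16 * (deriv f ξ - (f ξ)^2 + c₂/4) * (deriv f ξ + (f ξ)^2 - c₂/4) *
          (16 * c₄ * (f ξ)^4 - 16 * c₃ * s * (f ξ)^3 +
            (4 * c₃^2 + 8 * c₂ * c₄) * (f ξ)^2 -
            4 * c₂ * c₃ * s * f ξ + c₂^2 * c₄) /
          (4 * s * f ξ - c₃)^4 := by
    intro ξ hne
    have hne' : 4 * s * f ξ - c₃ ≠ 0 := fun h => hne (by linarith [h])
    rw [hF ξ, hderiv ξ hne, ← hs2]
    field_simp
    ring
  refine ⟨key, fun hric ξ hne => ?_⟩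
  have h := key ξ hne
  rw [hric ξ] at h
  have : (deriv F ξ)^2 - c₂ * (F ξ)^2 - c₃ * (F ξ)^3 - c₄ * (F ξ)^4 = 0 := by
    rw [h]; ring
  linarith [this]
end

section
/- Let c₀, c₁, c₂ be real constants with c₀ ≥ 0, and let g : ℝ → ℝ be differentiable satisfying the Riccati equation g′ = g² − c₂/4. Define F(ξ) = (c₁ + 4√c₀·g(ξ))/(4g(ξ)² − c₂) on an interval where 4g² − c₂ ≠ 0. Then F satisfies (F′)² = c₀ + c₁F + c₂F². -/
theorem stmt_13 (c₀ c₁ c₂ : ℝ) (hc₀ : 0 ≤ c₀) (g : ℝ → ℝ)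
    (hg : Differentiable ℝ g)
    (hric : ∀ ξ, deriv g ξ = (g ξ)^2 - c₂/4)
    (hden : ∀ ξ, 4 * (g ξ)^2 - c₂ ≠ 0) (F : ℝ → ℝ)
    (hF : ∀ ξ, F ξ = (c₁ + 4 * Real.sqrt c₀ * g ξ) / (4 * (g ξ)^2 - c₂)) :
    ∀ ξ, (deriv F ξ)^2 = c₀ + c₁ * F ξ + c₂ * (F ξ)^2 := by
  intro ξ
  set s := Real.sqrt c₀ with hs
  have hs2 : s ^ 2 = c₀ := Real.sq_sqrt hc₀
  have hgd : HasDerivAt g ((g ξ)^2 - c₂/4) ξ := by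
    have := (hg ξ).hasDerivAt
    rwa [hric ξ] at this
  have hu : HasDerivAt (fun x => c₁ + 4 * s * g x) (4 * s * ((g ξ)^2 - c₂/4)) ξ := by
    simpa using (hgd.const_mul (4 * s)).const_add c₁
  have hv : HasDerivAt (fun x => 4 * (g x)^2 - c₂) (8 * g ξ * ((g ξ)^2 - c₂/4)) ξ := by
    have := ((hgd.fun_pow 2).const_mul 4).sub_const c₂
    refine this.congr_deriv ?_
    ring
  have hFe : F = fun x => (c₁ + 4 * s * g x) / (4 * (g x)^2 - c₂) := funext hF
  have hFd := hu.div hv (hden ξ)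
  have hdF : deriv F ξ = (4 * s * ((g ξ)^2 - c₂/4) * (4 * (g ξ)^2 - c₂)
      - (c₁ + 4 * s * g ξ) * (8 * g ξ * ((g ξ)^2 - c₂/4))) / (4 * (g ξ)^2 - c₂)^2 := by
    rw [hFe]
    exact hFd.deriv
  rw [hdF, hF ξ]
  have h := hden ξ
  rw [← hs2]
  field_simp
  ring
end

section
/- Let c₂ be a real constant and let f_{n−1} : ℝ → ℝ be differentiable satisfying f_{n−1}′ = f_{n−1}² − c₂/4. For any real constant α with 4 + 4α·f_{n−1}(ξ) ≠ 0 on the interval, the function f_n(ξ) = (4f_{n−1}(ξ) + α·c₂)/(4 + 4α·f_{n−1}(ξ)) also satisfies f_n′ = f_n² − c₂/4. -/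
theorem stmt_14 (c₂ α : ℝ) (f : ℝ → ℝ) (hf : Differentiable ℝ f)
    (hric : ∀ ξ, deriv f ξ = (f ξ)^2 - c₂/4)
    (hden : ∀ ξ, 4 + 4 * α * f ξ ≠ 0) (fn : ℝ → ℝ)
    (hfn : ∀ ξ, fn ξ = (4 * f ξ + α * c₂) / (4 + 4 * α * f ξ)) :
    ∀ ξ, deriv fn ξ = (fn ξ)^2 - c₂/4 := by
  intro ξ
  have hfn' : fn = fun ξ => (4 * f ξ + α * c₂) / (4 + 4 * α * f ξ) := funext hfn
  subst hfn'
  have h1 : HasDerivAt f ((f ξ)^2 - c₂/4) ξ := by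
    have := (hf ξ).hasDerivAt
    rwa [hric ξ] at this
  have hnum : HasDerivAt (fun ξ => 4 * f ξ + α * c₂) (4 * ((f ξ)^2 - c₂/4)) ξ := by
    simpa using ((h1.const_mul 4).add_const (α * c₂))
  have hd : HasDerivAt (fun ξ => 4 + 4 * α * f ξ) (4 * α * ((f ξ)^2 - c₂/4)) ξ := by
    simpa using ((h1.const_mul (4 * α)).const_add 4)
  have : HasDerivAt (fun ξ => (4 * f ξ + α * c₂) / (4 + 4 * α * f ξ)) _ ξ := hnum.div hd (hden ξ)
  rw [this.deriv]
  have h := hden ξ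
  rw [div_pow, div_sub' (pow_ne_zero 2 h)]
  congr 1
  ring
end

section
/- Let c₂ > 0, c₃ ≠ 0 be real with c₃² = 4c₂c₄ (i.e. Δ = 0). Then F(ξ) = −(c₂/c₃)·(1 + tanh((√c₂/2)·ξ)) satisfies (F′)² = c₂F² + c₃F³ + c₄F⁴ for all real ξ. -/
lemma hasDerivAt_tanh' (x : ℝ) : HasDerivAt Real.tanh (1 - Real.tanh x ^ 2) x := by
  have hc : Real.cosh x ≠ 0 := (Real.cosh_pos x).ne'
  have h := (Real.hasDerivAt_sinh x).div (Real.hasDerivAt_cosh x) hc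
  have he : Real.tanh = fun x => Real.sinh x / Real.cosh x :=
    funext fun x => Real.tanh_eq_sinh_div_cosh x
  rw [he]
  refine h.congr_deriv ?_
  simp only
  field_simp

theorem stmt_16 (c₂ c₃ c₄ : ℝ) (hc₂ : 0 < c₂) (hc₃ : c₃ ≠ 0)
    (hΔ : c₃^2 = 4 * c₂ * c₄) (F : ℝ → ℝ)
    (hF : ∀ ξ, F ξ = -(c₂/c₃) * (1 + Real.tanh ((Real.sqrt c₂ / 2) * ξ))) :
    ∀ ξ, (deriv F ξ)^2 = c₂ * (F ξ)^2 + c₃ * (F ξ)^3 + c₄ * (F ξ)^4 := by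
  have hFe : F = fun ξ => -(c₂/c₃) * (1 + Real.tanh ((Real.sqrt c₂ / 2) * ξ)) := funext hF
  subst hFe
  intro ξ
  set a : ℝ := Real.sqrt c₂ / 2 with ha
  have ha2 : a ^ 2 = c₂ / 4 := by
    rw [ha, div_pow, Real.sq_sqrt hc₂.le]; norm_num
  have h1 : HasDerivAt (fun x : ℝ => a * x) a ξ := by
    simpa using (hasDerivAt_id ξ).const_mul a
  have h2 : HasDerivAt (fun x : ℝ => Real.tanh (a * x)) ((1 - Real.tanh (a * ξ) ^ 2) * a) ξ :=
    (hasDerivAt_tanh' (a * ξ)).comp ξ h1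
  have h3 : HasDerivAt (fun ξ : ℝ => -(c₂/c₃) * (1 + Real.tanh (a * ξ)))
      (-(c₂/c₃) * ((1 - Real.tanh (a * ξ) ^ 2) * a)) ξ := (h2.const_add 1).const_mul _
  rw [h3.deriv]
  have hc4 : c₄ = c₃ ^ 2 / (4 * c₂) := by field_simp; linarith [hΔ]
  rw [hc4]
  have h4 : a ^ 2 * 4 = c₂ := by rw [ha2]; ring
  simp only [hF]
  generalize Real.tanh (a * ξ) = t
  field_simp
  linear_combination ((1 - t^2)^2) * Real.sq_sqrt hc₂.le
end

section
/- For ω with 0 < ω < 3, the function u(x,t) = −ω/3 + (1/3)·√(2ω(3−ω)) − √(2ω(3−ω))·sech²(η), where η = (1/2)·(ω(3−ω)/2)^{1/4}·(x − ωt) and sech = 1/cosh, is a solution of the modified Camassa–Holm equation u_t − u_{xxt} + 3u²u_x = 2u_x u_{xx} + u u_{xxx}. -/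
noncomputable def mg0 (A B k ξ : ℝ) : ℝ := A - B * ((Real.cosh (k*ξ))^2)⁻¹
noncomputable def mg1 (B k ξ : ℝ) : ℝ :=
  2*B*k*Real.sinh (k*ξ) * ((Real.cosh (k*ξ))^3)⁻¹
noncomputable def mg2 (B k ξ : ℝ) : ℝ :=
  2*B*k^2*(((Real.cosh (k*ξ))^2)⁻¹ - 3*(Real.sinh (k*ξ))^2 * ((Real.cosh (k*ξ))^4)⁻¹)
noncomputable def mg3 (B k ξ : ℝ) : ℝ :=
  2*B*k^3*Real.sinh (k*ξ)*(-8*((Real.cosh (k*ξ))^3)⁻¹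
    + 12*(Real.sinh (k*ξ))^2*((Real.cosh (k*ξ))^5)⁻¹)

lemma cosh_ne (y : ℝ) : Real.cosh y ≠ 0 := (Real.cosh_pos (x := y)).ne'

lemma mhd0 (A B k ξ : ℝ) : HasDerivAt (fun ξ => mg0 A B k ξ) (mg1 B k ξ) ξ := by
  have hkx : HasDerivAt (fun ξ : ℝ => k*ξ) k ξ := by
    simpa using (hasDerivAt_id ξ).const_mul k
  have hc := hkx.cosh
  have h3 := (((hc.pow 2).inv (pow_ne_zero 2 (cosh_ne _))).const_mul B).const_sub A
  unfold mg0 mg1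
  refine HasDerivAt.congr_deriv h3 ?_
  simp only [Pi.pow_apply, Pi.inv_apply, Pi.mul_apply]
  have := cosh_ne (k*ξ)
  field_simp
  ring

lemma mhd1 (B k ξ : ℝ) : HasDerivAt (fun ξ => mg1 B k ξ) (mg2 B k ξ) ξ := by
  have hkx : HasDerivAt (fun ξ : ℝ => k*ξ) k ξ := by
    simpa using (hasDerivAt_id ξ).const_mul k
  have hc := hkx.cosh
  have hs := hkx.sinh
  have h := (hs.const_mul (2*B*k)).mul ((hc.pow 3).inv (pow_ne_zero 3 (cosh_ne _)))
  unfold mg1 mg2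
  refine HasDerivAt.congr_deriv h ?_
  simp only [Pi.pow_apply, Pi.inv_apply, Pi.mul_apply]
  have hc0 := cosh_ne (k*ξ)
  have hs2 : Real.sinh (k*ξ)^2 = Real.cosh (k*ξ)^2 - 1 := Real.sinh_sq _
  field_simp
  ring

lemma mhd2 (B k ξ : ℝ) : HasDerivAt (fun ξ => mg2 B k ξ) (mg3 B k ξ) ξ := by
  have hkx : HasDerivAt (fun ξ : ℝ => k*ξ) k ξ := by
    simpa using (hasDerivAt_id ξ).const_mul k
  have hc := hkx.cosh
  have hs := hkx.sinh
  have h := ((((hc.pow 2).inv (pow_ne_zero 2 (cosh_ne _))).sub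
    (((hs.pow 2).const_mul 3).mul ((hc.pow 4).inv (pow_ne_zero 4 (cosh_ne _))))).const_mul
    (2*B*k^2))
  unfold mg2 mg3
  refine HasDerivAt.congr_deriv h ?_
  simp only [Pi.pow_apply, Pi.inv_apply, Pi.mul_apply]
  have hc0 := cosh_ne (k*ξ)
  have hs2 : Real.sinh (k*ξ)^2 = Real.cosh (k*ξ)^2 - 1 := Real.sinh_sq _
  field_simp
  ring

lemma shiftD (g g' : ℝ → ℝ) (h : ∀ ξ, HasDerivAt g (g' ξ) ξ) (c : ℝ) (y : ℝ) :
    HasDerivAt (fun y => g (y - c)) (g' (y - c)) y := by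
  have := (h (y - c)).comp y ((hasDerivAt_id y).sub_const c)
  rw [mul_one] at this
  exact this

lemma timeD (g g' : ℝ → ℝ) (h : ∀ ξ, HasDerivAt g (g' ξ) ξ) (x ω : ℝ) (t : ℝ) :
    HasDerivAt (fun s => g (x - ω*s)) (g' (x - ω*t) * (-ω)) t := by
  have hlin : HasDerivAt (fun s : ℝ => x - ω*s) (-ω) t := by
    simpa using ((hasDerivAt_id t).const_mul ω).const_sub x
  exact (h (x - ω*t)).comp t hlin

lemma key (ω A B k : ℝ) (hA : 3*A = B - ω) (hB2 : B^2 = 2*ω*(3-ω)) (hk2 : k^2 = B/8)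
    (ξ : ℝ) :
    mg1 B k ξ * (-ω) - mg3 B k ξ * (-ω) + 3*(mg0 A B k ξ)^2 * mg1 B k ξ =
      2 * mg1 B k ξ * mg2 B k ξ + mg0 A B k ξ * mg3 B k ξ := by
  have hc0 : Real.cosh (k*ξ) ≠ 0 := cosh_ne _
  have hs2 : Real.sinh (k*ξ)^2 = Real.cosh (k*ξ)^2 - 1 := Real.sinh_sq _
  set c := Real.cosh (k*ξ) with hc
  set s := Real.sinh (k*ξ) with hs
  simp only [mg0, mg1, mg2, mg3, ← hc, ← hs]
  field_simp
  linear_combination (B*k*s) *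
    ((c^4*(A+(B/2-ω)/3) - c^2*(3*B/2)) * hA + (c^4/6) * hB2 +
      (c^4*4*(ω-A) + c^2*12*(-ω+A+B) - 24*B) * hk2 +
      12*k^2*(ω*c^2 - A*c^2 + 2*B) * hs2)

theorem stmt_19 (ω : ℝ) (hω : 0 < ω) (hω3 : ω < 3) (u : ℝ → ℝ → ℝ)
    (hu : ∀ x t, u x t = -ω/3 + (1/3) * Real.sqrt (2*ω*(3-ω)) -
      Real.sqrt (2*ω*(3-ω)) *
        (1 / Real.cosh ((1/2) * (ω*(3-ω)/2) ^ ((1:ℝ)/4) * (x - ω*t)))^2) :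
    ∀ x t,
      deriv (fun s => u x s) t
        - deriv (fun s => iteratedDeriv 2 (fun y => u y s) x) t
        + 3 * (u x t)^2 * deriv (fun y => u y t) x =
      2 * deriv (fun y => u y t) x * iteratedDeriv 2 (fun y => u y t) x
        + u x t * iteratedDeriv 3 (fun y => u y t) x := by
  set B := Real.sqrt (2*ω*(3-ω)) with hBdef
  set k := (1/2) * (ω*(3-ω)/2) ^ ((1:ℝ)/4) with hkdef
  set A : ℝ := -ω/3 + B/3 with hAdef
  have hBnn : (0:ℝ) ≤ 2*ω*(3-ω) := by nlinarith
  have hB2 : B^2 = 2*ω*(3-ω) := Real.sq_sqrt hBnn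
  have hA : 3*A = B - ω := by rw [hAdef]; ring
  have hk2 : k^2 = B/8 := by
    have hnn : (0:ℝ) ≤ ω*(3-ω)/2 := by nlinarith
    have hX : ((ω*(3-ω)/2) ^ ((1:ℝ)/4))^2 = Real.sqrt (ω*(3-ω)/2) := by
      rw [← Real.rpow_natCast ((ω*(3-ω)/2) ^ ((1:ℝ)/4)) 2, ← Real.rpow_mul hnn,
        Real.sqrt_eq_rpow]
      norm_num
    have hsq : Real.sqrt (ω*(3-ω)/2) = B/2 := by
      rw [hBdef, show ω*(3-ω)/2 = (2*ω*(3-ω)) * (1/4) by ring,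
        Real.sqrt_mul hBnn, show (1/4:ℝ) = (1/2)^2 by norm_num,
        Real.sqrt_sq (by norm_num : (0:ℝ) ≤ 1/2)]
      ring
    rw [hkdef, mul_pow, hX, hsq]
    ring
  have hug : ∀ y s, u y s = mg0 A B k (y - ω*s) := by
    intro y s
    rw [hu]
    simp only [mg0, hAdef, one_div, inv_pow]
    ring
  intro x t
  -- spatial derivatives
  have hDer1 : ∀ s : ℝ, deriv (fun y => u y s) = fun y => mg1 B k (y - ω*s) := by
    intro s
    funext y
    have : (fun y => u y s) = fun y => mg0 A B k (y - ω*s) := funext fun y => hug y s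
    rw [this]
    exact (shiftD _ _ (mhd0 A B k) (ω*s) y).deriv
  have hDer2 : ∀ s : ℝ, iteratedDeriv 2 (fun y => u y s) = fun y => mg2 B k (y - ω*s) := by
    intro s
    rw [iteratedDeriv_succ, iteratedDeriv_one, hDer1 s]
    funext y
    exact (shiftD _ _ (mhd1 B k) (ω*s) y).deriv
  have hDer3 : iteratedDeriv 3 (fun y => u y t) = fun y => mg3 B k (y - ω*t) := by
    rw [iteratedDeriv_succ, hDer2 t]
    funext y
    exact (shiftD _ _ (mhd2 B k) (ω*t) y).deriv
  -- time derivatives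
  have hT0 : deriv (fun s => u x s) t = mg1 B k (x - ω*t) * (-ω) := by
    have : (fun s => u x s) = fun s => mg0 A B k (x - ω*s) := funext fun s => hug x s
    rw [this]
    exact (timeD _ _ (mhd0 A B k) x ω t).deriv
  have hT2 : deriv (fun s => iteratedDeriv 2 (fun y => u y s) x) t
      = mg3 B k (x - ω*t) * (-ω) := by
    have : (fun s => iteratedDeriv 2 (fun y => u y s) x) = fun s => mg2 B k (x - ω*s) := by
      funext s; rw [hDer2 s]
    rw [this]
    exact (timeD _ _ (mhd2 B k) x ω t).deriv
  rw [hT0, hT2, hDer1 t, hDer2 t, hDer3, hug x t]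
  exact key ω A B k hA hB2 hk2 (x - ω*t)
end
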